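/- arXiv:2605.23225 — 3 statements merged into one kernel-verified Lean document; each statement's English description precedes it below -/
import Mathlib

section
/- Fix m ≥ 1 and probability distributions p, q over [n]. For each i let X_i ~ Poisson(m·p_i) and Y_i ~ Poisson(m·q_i) be independent, and set Z_i = ((X_i − Y_i)/m)·log(1/(X_i+Y_i)) (with Z_i = 0 when X_i + Y_i = 0). Then for any subset S ⊆ [n] with p_i + q_i > 0 for i ∈ S, |∑_{i∈S} (p_i − q_i) log(1/(m(p_i+q_i))) − E[∑_{i∈S} Z_i]| ≤ ∑_{i∈S} |p_i − q_i|/(m(p_i + q_i)). -/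
open Finset

/-- The Poisson probability mass function with rate `lam`. -/
noncomputable def poissonPMFReal (lam : ℝ) (k : ℕ) : ℝ :=
  Real.exp (-lam) * lam ^ k / (Nat.factorial k)

namespace Stmt9

local notation "P" => poissonPMFReal

lemma P_nonneg {t : ℝ} (ht : 0 ≤ t) (k : ℕ) : 0 ≤ P t k := by
  unfold poissonPMFReal; positivity

lemma P_succ (t : ℝ) (k : ℕ) : ((k : ℝ) + 1) * P t (k + 1) = t * P t k := by
  unfold poissonPMFReal
  have hk : (Nat.factorial k : ℝ) ≠ 0 := Nat.cast_ne_zero.mpr (Nat.factorial_ne_zero k)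
  have hk1 : ((k : ℝ) + 1) ≠ 0 := by positivity
  rw [Nat.factorial_succ]
  push_cast
  field_simp
  ring

lemma hasSum_P (t : ℝ) : HasSum (P t) 1 := by
  have h : HasSum (fun k : ℕ => t ^ k / (Nat.factorial k)) (Real.exp t) := by
    rw [Real.exp_eq_exp_ℝ]
    exact NormedSpace.expSeries_div_hasSum_exp t
  have h2 := h.mul_left (Real.exp (-t))
  have : Real.exp (-t) * Real.exp t = 1 := by
    rw [← Real.exp_add]; simp
  rw [this] at h2
  refine h2.congr_fun fun k => ?_
  unfold poissonPMFReal
  ring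

lemma summable_P (t : ℝ) : Summable (P t) := (hasSum_P t).summable

lemma tsum_P (t : ℝ) : ∑' k, P t k = 1 := (hasSum_P t).tsum_eq

lemma summable_mul_shift (t : ℝ) (f : ℕ → ℝ)
    (h : Summable fun k => P t k * f (k + 1)) :
    Summable fun k : ℕ => (k : ℝ) * P t k * f k := by
  rw [← summable_nat_add_iff 1]
  have e : (fun k : ℕ => ((k + 1 : ℕ) : ℝ) * P t (k + 1) * f (k + 1))
      = fun k : ℕ => t * (P t k * f (k + 1)) := by
    funext k; push_cast; rw [P_succ]; ring
  exact e ▸ h.mul_left t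

lemma summable_P_mul_k (t : ℝ) : Summable fun k : ℕ => (k : ℝ) * P t k := by
  have := summable_mul_shift t (fun _ => 1) (by simpa using summable_P t)
  simpa using this

lemma summable_P_mul_k2 (t : ℝ) : Summable fun k : ℕ => (k : ℝ) * P t k * (k : ℝ) := by
  apply summable_mul_shift t (fun k => (k : ℝ))
  have : (fun k : ℕ => P t k * ((k : ℝ) + 1))
      = fun k : ℕ => (k : ℝ) * P t k + P t k := by funext k; ring
  rw [show (fun k : ℕ => P t k * ((k + 1 : ℕ) : ℝ)) = fun k : ℕ => (k:ℝ) * P t k + P t k by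
    funext k; push_cast; ring]
  exact (summable_P_mul_k t).add (summable_P t)

lemma summable_P_sq (t : ℝ) : Summable fun k => P t k * ((k : ℝ) + 1) ^ 2 := by
  have h := ((summable_P_mul_k2 t).add ((summable_P_mul_k t).mul_left 2)).add (summable_P t)
  exact h.congr fun k => by ring

lemma summable_of_abs_le {f g : ℕ → ℝ} (h : ∀ k, |f k| ≤ g k) (hg : Summable g) :
    Summable f :=
  (Summable.of_nonneg_of_le (fun k => abs_nonneg _) h hg).of_abs

lemma summable_dom {t c : ℝ} (ht : 0 ≤ t) {f : ℕ → ℝ}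
    (h : ∀ k, |f k| ≤ c * ((k : ℝ) + 1) ^ 2) : Summable fun k => P t k * f k := by
  refine summable_of_abs_le (g := fun k => c * (P t k * ((k:ℝ)+1)^2)) (fun k => ?_)
    ((summable_P_sq t).mul_left c)
  rw [abs_mul, abs_of_nonneg (P_nonneg ht k)]
  calc P t k * |f k| ≤ P t k * (c * ((k:ℝ)+1)^2) :=
        mul_le_mul_of_nonneg_left (h k) (P_nonneg ht k)
    _ = c * (P t k * ((k:ℝ)+1)^2) := by ring

lemma tsum_shift {g : ℕ → ℝ} (h0 : g 0 = 0) : ∑' k, g (k + 1) = ∑' k, g k := by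
  refine Function.Injective.tsum_eq (f := g) (g := Nat.succ) Nat.succ_injective ?_
  intro x hx
  rcases x with _ | n
  · exact absurd h0 hx
  · exact ⟨n, rfl⟩

lemma tsum_shift_P (t : ℝ) (f : ℕ → ℝ) :
    ∑' k : ℕ, (k : ℝ) * P t k * f k = t * ∑' k, P t k * f (k + 1) := by
  rw [← tsum_shift (g := fun k : ℕ => (k : ℝ) * P t k * f k) (by simp), ← tsum_mul_left]
  congr 1; funext k
  push_cast
  rw [P_succ]; ring

lemma tsum_P_mul_k (t : ℝ) : ∑' k : ℕ, (k : ℝ) * P t k = t := by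
  have := tsum_shift_P t (fun _ => 1)
  simpa [tsum_P] using this

lemma tsum_P_linear (t a b : ℝ) : ∑' k : ℕ, P t k * (a + b * k) = a + b * t := by
  have e : (fun k : ℕ => P t k * (a + b * k))
      = fun k : ℕ => a * P t k + b * ((k : ℝ) * P t k) := by funext k; ring
  rw [e, Summable.tsum_add ((summable_P t).mul_left a) ((summable_P_mul_k t).mul_left b),
    tsum_mul_left, tsum_mul_left, tsum_P, tsum_P_mul_k]
  ring

lemma abs_tsum_le {f g : ℕ → ℝ} (h : ∀ k, |f k| ≤ g k) (hg : Summable g) :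
    |∑' k, f k| ≤ ∑' k, g k := by
  have habs : Summable fun k => |f k| :=
    Summable.of_nonneg_of_le (fun k => abs_nonneg _) h hg
  calc |∑' k, f k| ≤ ∑' k, |f k| := by
        simpa [Real.norm_eq_abs] using norm_tsum_le_tsum_norm (f := f) (by simpa using habs)
    _ ≤ ∑' k, g k := Summable.tsum_le_tsum h habs hg

lemma abs_log_nat_le (j : ℕ) : |Real.log j| ≤ (j : ℝ) := by
  rcases Nat.eq_zero_or_pos j with h | h
  · simp [h]
  · have hj : (0 : ℝ) < j := by exact_mod_cast h
    have h1 : (1 : ℝ) ≤ j := by exact_mod_cast h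
    rw [abs_of_nonneg (Real.log_nonneg h1)]
    have := Real.log_le_sub_one_of_pos hj
    linarith

end Stmt9


namespace Stmt9

local notation "P" => poissonPMFReal

noncomputable def Gf (mu : ℝ) (x : ℕ) : ℝ := ∑' y : ℕ, P mu y * Real.log ((x:ℝ) + y)
noncomputable def Hf (mu : ℝ) (x : ℕ) : ℝ := ∑' y : ℕ, P mu y * Real.log ((x:ℝ) + y + 1)
noncomputable def Rf (mu : ℝ) (x : ℕ) : ℝ := ∑' y : ℕ, P mu y * ((x:ℝ) + y + 1)⁻¹
noncomputable def Qf (mu : ℝ) (x : ℕ) : ℝ := ∑' y : ℕ, P mu y * ((x:ℝ) + y)⁻¹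
noncomputable def Nf (mu : ℝ) (x : ℕ) : ℝ := ∑' y : ℕ, (y:ℝ) * P mu y * ((x:ℝ) + y)⁻¹

lemma summable_P_linear (t a b : ℝ) : Summable fun k : ℕ => P t k * (a + b * k) := by
  have h := ((summable_P t).mul_left a).add ((summable_P_mul_k t).mul_left b)
  exact h.congr fun k => by ring

lemma abs_log_xy (x y : ℕ) : |Real.log ((x:ℝ) + y)| ≤ (x:ℝ) + y := by
  have := abs_log_nat_le (x + y)
  push_cast at this
  exact this

lemma abs_log_xy1 (x y : ℕ) : |Real.log ((x:ℝ) + y + 1)| ≤ (x:ℝ) + y + 1 := by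
  have := abs_log_nat_le (x + y + 1)
  push_cast at this
  exact this

lemma inv_nat_le_one (n : ℕ) : |((n:ℝ))⁻¹| ≤ 1 := by
  rcases Nat.eq_zero_or_pos n with h | h
  · simp [h]
  · have h1 : (1:ℝ) ≤ n := by exact_mod_cast h
    rw [abs_of_nonneg (inv_nonneg.mpr (by linarith))]
    exact inv_le_one_of_one_le₀ h1

lemma inv_xy_mem (x y : ℕ) : |((x:ℝ) + y)⁻¹| ≤ 1 := by
  have := inv_nat_le_one (x + y)
  push_cast at this
  exact this

lemma inv_xy1_mem (x y : ℕ) : |((x:ℝ) + y + 1)⁻¹| ≤ 1 := by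
  have hx : (0:ℝ) ≤ (x:ℝ) := Nat.cast_nonneg x
  have hy : (0:ℝ) ≤ (y:ℝ) := Nat.cast_nonneg y
  rw [abs_of_nonneg (by positivity)]
  exact inv_le_one_of_one_le₀ (by linarith)

variable {mu : ℝ}

lemma summable_G (hmu : 0 ≤ mu) (x : ℕ) :
    Summable fun y : ℕ => P mu y * Real.log ((x:ℝ) + y) := by
  refine summable_dom (c := (x:ℝ) + 1) hmu fun y => ?_
  refine (abs_log_xy x y).trans ?_
  have h1 : (0:ℝ) ≤ (x:ℝ) := Nat.cast_nonneg x
  have h2 : (0:ℝ) ≤ (y:ℝ) := Nat.cast_nonneg y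
  nlinarith [mul_nonneg h1 h2, sq_nonneg ((y:ℝ)), mul_nonneg h1 (sq_nonneg ((y:ℝ)))]

lemma summable_H (hmu : 0 ≤ mu) (x : ℕ) :
    Summable fun y : ℕ => P mu y * Real.log ((x:ℝ) + y + 1) := by
  refine summable_dom (c := (x:ℝ) + 2) hmu fun y => ?_
  refine (abs_log_xy1 x y).trans ?_
  have h1 : (0:ℝ) ≤ (x:ℝ) := Nat.cast_nonneg x
  have h2 : (0:ℝ) ≤ (y:ℝ) := Nat.cast_nonneg y
  nlinarith [mul_nonneg h1 h2, sq_nonneg ((y:ℝ)), mul_nonneg h1 (sq_nonneg ((y:ℝ)))]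

lemma summable_R (hmu : 0 ≤ mu) (x : ℕ) :
    Summable fun y : ℕ => P mu y * ((x:ℝ) + y + 1)⁻¹ :=
  summable_dom (c := 1) hmu fun y => (inv_xy1_mem x y).trans (by nlinarith [(Nat.cast_nonneg y : (0:ℝ) ≤ (y:ℝ))])

lemma summable_Q (hmu : 0 ≤ mu) (x : ℕ) :
    Summable fun y : ℕ => P mu y * ((x:ℝ) + y)⁻¹ :=
  summable_dom (c := 1) hmu fun y => (inv_xy_mem x y).trans (by nlinarith [(Nat.cast_nonneg y : (0:ℝ) ≤ (y:ℝ))])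

lemma abs_Gf_le (hmu : 0 ≤ mu) (x : ℕ) : |Gf mu x| ≤ (x:ℝ) + mu := by
  have hb : ∀ y : ℕ, |P mu y * Real.log ((x:ℝ) + y)| ≤ P mu y * ((x:ℝ) + 1 * y) := by
    intro y
    rw [abs_mul, abs_of_nonneg (P_nonneg hmu y), one_mul]
    exact mul_le_mul_of_nonneg_left (abs_log_xy x y) (P_nonneg hmu y)
  have h := abs_tsum_le hb (summable_P_linear mu (x:ℝ) 1)
  rw [tsum_P_linear] at h
  simpa [Gf] using h

lemma abs_Hf_le (hmu : 0 ≤ mu) (x : ℕ) : |Hf mu x| ≤ (x:ℝ) + 1 + mu := by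
  have hb : ∀ y : ℕ, |P mu y * Real.log ((x:ℝ) + y + 1)| ≤ P mu y * (((x:ℝ) + 1) + 1 * y) := by
    intro y
    rw [abs_mul, abs_of_nonneg (P_nonneg hmu y), one_mul]
    refine mul_le_mul_of_nonneg_left ((abs_log_xy1 x y).trans (le_of_eq (by ring)))
      (P_nonneg hmu y)
  have h := abs_tsum_le hb (summable_P_linear mu ((x:ℝ) + 1) 1)
  rw [tsum_P_linear] at h
  simpa [Hf] using h

lemma abs_Rf_le (hmu : 0 ≤ mu) (x : ℕ) : |Rf mu x| ≤ 1 := by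
  have hb : ∀ y : ℕ, |P mu y * ((x:ℝ) + y + 1)⁻¹| ≤ P mu y := by
    intro y
    rw [abs_mul, abs_of_nonneg (P_nonneg hmu y)]
    calc P mu y * |((x:ℝ) + y + 1)⁻¹| ≤ P mu y * 1 :=
        mul_le_mul_of_nonneg_left (inv_xy1_mem x y) (P_nonneg hmu y)
      _ = P mu y := mul_one _
  have h := abs_tsum_le hb (summable_P mu)
  rw [tsum_P] at h
  simpa [Rf] using h

lemma abs_Qf_le (hmu : 0 ≤ mu) (x : ℕ) : |Qf mu x| ≤ 1 := by
  have hb : ∀ y : ℕ, |P mu y * ((x:ℝ) + y)⁻¹| ≤ P mu y := by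
    intro y
    rw [abs_mul, abs_of_nonneg (P_nonneg hmu y)]
    calc P mu y * |((x:ℝ) + y)⁻¹| ≤ P mu y * 1 :=
        mul_le_mul_of_nonneg_left (inv_xy_mem x y) (P_nonneg hmu y)
      _ = P mu y := mul_one _
  have h := abs_tsum_le hb (summable_P mu)
  rw [tsum_P] at h
  simpa [Qf] using h

lemma abs_Nf_le (hmu : 0 ≤ mu) (x : ℕ) : |Nf mu x| ≤ mu := by
  have hb : ∀ y : ℕ, |(y:ℝ) * P mu y * ((x:ℝ) + y)⁻¹| ≤ (y:ℝ) * P mu y := by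
    intro y
    have hy : (0:ℝ) ≤ (y:ℝ) * P mu y := mul_nonneg (Nat.cast_nonneg y) (P_nonneg hmu y)
    rw [abs_mul, abs_of_nonneg hy]
    calc (y:ℝ) * P mu y * |((x:ℝ) + y)⁻¹| ≤ (y:ℝ) * P mu y * 1 :=
        mul_le_mul_of_nonneg_left (inv_xy_mem x y) hy
      _ = (y:ℝ) * P mu y := mul_one _
  have h := abs_tsum_le hb (summable_P_mul_k mu)
  rw [tsum_P_mul_k] at h
  simpa [Nf] using h

end Stmt9


namespace Stmt9

local notation "P" => poissonPMFReal

variable {lam mu : ℝ}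

lemma summable_PH (hl : 0 ≤ lam) (hmu : 0 ≤ mu) :
    Summable fun x : ℕ => P lam x * Hf mu x := by
  refine summable_dom (c := 2 + mu) hl fun x => ?_
  refine (abs_Hf_le hmu x).trans ?_
  have hx : (0:ℝ) ≤ (x:ℝ) := Nat.cast_nonneg x
  nlinarith [sq_nonneg ((x:ℝ)), mul_nonneg hmu hx, mul_nonneg hmu (sq_nonneg ((x:ℝ)))]

lemma summable_xPG (hl : 0 ≤ lam) (hmu : 0 ≤ mu) :
    Summable fun x : ℕ => (x:ℝ) * P lam x * Gf mu x := by
  refine summable_mul_shift lam (Gf mu) (summable_dom (c := 2 + mu) hl fun x => ?_)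
  refine (abs_Gf_le hmu (x+1)).trans ?_
  push_cast
  have hx : (0:ℝ) ≤ (x:ℝ) := Nat.cast_nonneg x
  nlinarith [sq_nonneg ((x:ℝ)), mul_nonneg hmu hx, mul_nonneg hmu (sq_nonneg ((x:ℝ)))]

lemma summable_PR (hl : 0 ≤ lam) (hmu : 0 ≤ mu) :
    Summable fun x : ℕ => P lam x * Rf mu x := by
  refine summable_dom (c := 1) hl fun x => ?_
  refine (abs_Rf_le hmu x).trans ?_
  nlinarith [(Nat.cast_nonneg x : (0:ℝ) ≤ (x:ℝ))]

lemma summable_PN (hl : 0 ≤ lam) (hmu : 0 ≤ mu) :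
    Summable fun x : ℕ => P lam x * Nf mu x := by
  refine summable_dom (c := mu + 1) hl fun x => ?_
  refine (abs_Nf_le hmu x).trans ?_
  have hx : (0:ℝ) ≤ (x:ℝ) := Nat.cast_nonneg x
  nlinarith [sq_nonneg ((x:ℝ)), mul_nonneg hmu hx, mul_nonneg hmu (sq_nonneg ((x:ℝ)))]

lemma summable_xPQ (hl : 0 ≤ lam) (hmu : 0 ≤ mu) :
    Summable fun x : ℕ => (x:ℝ) * P lam x * Qf mu x := by
  refine summable_mul_shift lam (Qf mu) (summable_dom (c := 1) hl fun x => ?_)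
  refine (abs_Qf_le hmu (x+1)).trans ?_
  nlinarith [(Nat.cast_nonneg x : (0:ℝ) ≤ (x:ℝ))]

lemma summable_yPN_inner (hl : 0 ≤ lam) (hmu : 0 ≤ mu) (x : ℕ) :
    Summable fun y : ℕ => (y:ℝ) * P mu y * ((x:ℝ) + y)⁻¹ := by
  refine summable_of_abs_le (g := fun y : ℕ => (y:ℝ) * P mu y) (fun y => ?_)
    (summable_P_mul_k mu)
  have hy : (0:ℝ) ≤ (y:ℝ) * P mu y := mul_nonneg (Nat.cast_nonneg y) (P_nonneg hmu y)
  rw [abs_mul, abs_of_nonneg hy]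
  calc (y:ℝ) * P mu y * |((x:ℝ) + y)⁻¹| ≤ (y:ℝ) * P mu y * 1 :=
      mul_le_mul_of_nonneg_left (inv_xy_mem x y) hy
    _ = (y:ℝ) * P mu y := mul_one _

lemma inner_eq (m : ℝ) (hl : 0 ≤ lam) (hmu : 0 ≤ mu) (x : ℕ) :
    ∑' y : ℕ, P lam x * P mu y * (((x:ℝ) - y) / m * Real.log (1 / ((x:ℝ) + y)))
    = (1/m) * (mu * (P lam x * Hf mu x) - (x:ℝ) * P lam x * Gf mu x) := by
  have e : ∀ y : ℕ, P lam x * P mu y * (((x:ℝ) - y) / m * Real.log (1 / ((x:ℝ) + y)))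
      = (1/m) * ((y:ℝ) * P mu y * (P lam x * Real.log ((x:ℝ) + y))
          - (x:ℝ) * P lam x * (P mu y * Real.log ((x:ℝ) + y))) := by
    intro y; rw [one_div ((x:ℝ) + y), Real.log_inv]; ring
  rw [tsum_congr e, tsum_mul_left]
  congr 1
  have sA : Summable fun y : ℕ => (y:ℝ) * P mu y * (P lam x * Real.log ((x:ℝ) + y)) := by
    refine summable_mul_shift mu _ ?_
    refine ((summable_H hmu x).mul_left (P lam x)).congr fun y => ?_
    push_cast; ring
  have sB : Summable fun y : ℕ => (x:ℝ) * P lam x * (P mu y * Real.log ((x:ℝ) + y)) :=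
    (summable_G hmu x).mul_left _
  rw [Summable.tsum_sub sA sB, tsum_mul_left (a := (x:ℝ) * P lam x),
    tsum_shift_P mu (fun y => P lam x * Real.log ((x:ℝ) + y))]
  have h1 : ∑' y : ℕ, P mu y * (P lam x * Real.log ((x:ℝ) + ((y + 1 : ℕ) : ℝ)))
      = P lam x * Hf mu x := by
    rw [Hf, ← tsum_mul_left]
    exact tsum_congr fun y => by push_cast; ring
  rw [h1]
  rfl

lemma E_eq (m : ℝ) (hl : 0 ≤ lam) (hmu : 0 ≤ mu) :
    ∑' x : ℕ, ∑' y : ℕ, P lam x * P mu y * (((x:ℝ) - y) / m * Real.log (1 / ((x:ℝ) + y)))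
    = ((mu - lam) / m) * ∑' x : ℕ, P lam x * Hf mu x := by
  rw [tsum_congr (fun x => inner_eq m hl hmu x), tsum_mul_left]
  have sH : Summable fun x : ℕ => mu * (P lam x * Hf mu x) :=
    (summable_PH hl hmu).mul_left mu
  have sG : Summable fun x : ℕ => (x:ℝ) * P lam x * Gf mu x := summable_xPG hl hmu
  rw [Summable.tsum_sub sH sG, tsum_mul_left (a := mu), tsum_shift_P lam (Gf mu)]
  have hGH : ∑' x : ℕ, P lam x * Gf mu (x + 1) = ∑' x : ℕ, P lam x * Hf mu x := by
    refine tsum_congr fun x => ?_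
    congr 1
    rw [Gf, Hf]
    refine tsum_congr fun y => ?_
    have : ((x + 1 : ℕ) : ℝ) + y = (x:ℝ) + y + 1 := by push_cast; ring
    rw [this]
  rw [hGH]
  ring

lemma C_le (hl : 0 ≤ lam) (hmu : 0 ≤ mu) (ht : 0 < lam + mu) :
    ∑' x : ℕ, P lam x * Hf mu x ≤ Real.log (lam + mu) + (lam + mu)⁻¹ := by
  set t := lam + mu with htdef
  have key : ∀ x : ℕ, Hf mu x ≤ (Real.log t - 1 + ((x:ℝ) + 1) * t⁻¹) + t⁻¹ * mu := by
    intro x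
    have hpt : ∀ y : ℕ, P mu y * Real.log ((x:ℝ) + y + 1)
        ≤ P mu y * ((Real.log t - 1 + ((x:ℝ) + 1) * t⁻¹) + t⁻¹ * y) := by
      intro y
      refine mul_le_mul_of_nonneg_left ?_ (P_nonneg hmu y)
      have hpos : (0:ℝ) < (x:ℝ) + y + 1 := by positivity
      have hlog := Real.log_le_sub_one_of_pos (show (0:ℝ) < ((x:ℝ) + y + 1) / t by positivity)
      rw [Real.log_div (ne_of_gt hpos) (ne_of_gt ht)] at hlog
      have hdiv : ((x:ℝ) + y + 1) / t = ((x:ℝ) + 1) * t⁻¹ + t⁻¹ * y := by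
        field_simp; ring
      rw [hdiv] at hlog
      linarith
    have h := Summable.tsum_le_tsum hpt (summable_H hmu x)
      (summable_P_linear mu ((Real.log t - 1 + ((x:ℝ) + 1) * t⁻¹)) t⁻¹)
    rw [tsum_P_linear] at h
    exact h
  have houter : ∀ x : ℕ, P lam x * Hf mu x
      ≤ P lam x * ((Real.log t - 1 + t⁻¹ + t⁻¹ * mu) + t⁻¹ * x) := by
    intro x
    refine mul_le_mul_of_nonneg_left ?_ (P_nonneg hl x)
    have h := key x
    have e : ((x:ℝ) + 1) * t⁻¹ = t⁻¹ + t⁻¹ * x := by ring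
    linarith [e ▸ h]
  have hsum := Summable.tsum_le_tsum houter (summable_PH hl hmu)
    (summable_P_linear lam (Real.log t - 1 + t⁻¹ + t⁻¹ * mu) t⁻¹)
  rw [tsum_P_linear] at hsum
  have hone : t⁻¹ * mu + t⁻¹ * lam = 1 := by
    rw [← mul_add, htdef]
    rw [show mu + lam = lam + mu by ring]
    exact inv_mul_cancel₀ (ne_of_gt ht)
  linarith

lemma T_le (hl : 0 ≤ lam) (hmu : 0 ≤ mu) :
    (lam + mu) * ∑' x : ℕ, P lam x * Rf mu x ≤ 1 := by
  have step1 : ∀ x : ℕ, mu * Rf mu x = Nf mu x := by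
    intro x
    rw [Nf, tsum_shift_P mu (fun y => ((x:ℝ) + y)⁻¹), Rf]
    congr 1
    refine tsum_congr fun y => ?_
    congr 1
    push_cast; ring
  have step2 : lam * ∑' x : ℕ, P lam x * Rf mu x
      = ∑' x : ℕ, (x:ℝ) * P lam x * Qf mu x := by
    rw [tsum_shift_P lam (Qf mu)]
    congr 1
    refine tsum_congr fun x => ?_
    congr 1
    rw [Qf, Rf]
    refine tsum_congr fun y => ?_
    have : ((x + 1 : ℕ) : ℝ) + y = (x:ℝ) + y + 1 := by push_cast; ring
    rw [this]
  have step3 : (lam + mu) * ∑' x : ℕ, P lam x * Rf mu x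
      = ∑' x : ℕ, ((x:ℝ) * P lam x * Qf mu x + P lam x * Nf mu x) := by
    rw [Summable.tsum_add (summable_xPQ hl hmu) (summable_PN hl hmu)]
    have hmuSR : mu * ∑' x : ℕ, P lam x * Rf mu x = ∑' x : ℕ, P lam x * Nf mu x := by
      rw [← tsum_mul_left]
      exact tsum_congr fun x => by rw [← step1 x]; ring
    rw [add_mul, step2, hmuSR]
  rw [step3]
  have step4 : ∀ x : ℕ, (x:ℝ) * P lam x * Qf mu x + P lam x * Nf mu x ≤ P lam x := by
    intro x
    have e1 : (x:ℝ) * P lam x * Qf mu x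
        = ∑' y : ℕ, ((x:ℝ) * P lam x) * (P mu y * ((x:ℝ) + y)⁻¹) := by
      rw [Qf, tsum_mul_left]
    have e2 : P lam x * Nf mu x
        = ∑' y : ℕ, P lam x * ((y:ℝ) * P mu y * ((x:ℝ) + y)⁻¹) := by
      rw [Nf, tsum_mul_left]
    have s1 : Summable fun y : ℕ => ((x:ℝ) * P lam x) * (P mu y * ((x:ℝ) + y)⁻¹) :=
      (summable_Q hmu x).mul_left _
    have s2 : Summable fun y : ℕ => P lam x * ((y:ℝ) * P mu y * ((x:ℝ) + y)⁻¹) :=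
      (summable_yPN_inner hl hmu x).mul_left _
    rw [e1, e2, ← Summable.tsum_add s1 s2]
    have hcomb : ∀ y : ℕ, ((x:ℝ) * P lam x) * (P mu y * ((x:ℝ) + y)⁻¹)
        + P lam x * ((y:ℝ) * P mu y * ((x:ℝ) + y)⁻¹)
        = P lam x * P mu y * (((x:ℝ) + y) * ((x:ℝ) + y)⁻¹) := fun y => by ring
    rw [tsum_congr hcomb]
    have hle : ∀ y : ℕ, P lam x * P mu y * (((x:ℝ) + y) * ((x:ℝ) + y)⁻¹)
        ≤ P lam x * P mu y := by
      intro y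
      have hw : ((x:ℝ) + y) * ((x:ℝ) + y)⁻¹ ≤ 1 := by
        rcases eq_or_ne ((x:ℝ) + y) 0 with h | h
        · rw [h]; simp
        · rw [mul_inv_cancel₀ h]
      calc P lam x * P mu y * (((x:ℝ) + y) * ((x:ℝ) + y)⁻¹)
          ≤ P lam x * P mu y * 1 :=
            mul_le_mul_of_nonneg_left hw (mul_nonneg (P_nonneg hl x) (P_nonneg hmu y))
        _ = P lam x * P mu y := mul_one _
    have hsl : Summable fun y : ℕ => P lam x * P mu y * (((x:ℝ) + y) * ((x:ℝ) + y)⁻¹) :=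
      ((s1.add s2).congr hcomb)
    have h := Summable.tsum_le_tsum hle hsl ((summable_P mu).mul_left (P lam x))
    calc ∑' y : ℕ, P lam x * P mu y * (((x:ℝ) + y) * ((x:ℝ) + y)⁻¹)
        ≤ ∑' y : ℕ, P lam x * P mu y := h
      _ = P lam x := by rw [tsum_mul_left, tsum_P, mul_one]
  have hsl : Summable fun x : ℕ => (x:ℝ) * P lam x * Qf mu x + P lam x * Nf mu x :=
    (summable_xPQ hl hmu).add (summable_PN hl hmu)
  have h := Summable.tsum_le_tsum step4 hsl (summable_P lam)
  rw [tsum_P] at h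
  exact h

lemma C_ge (hl : 0 ≤ lam) (hmu : 0 ≤ mu) (ht : 0 < lam + mu) :
    Real.log (lam + mu) ≤ ∑' x : ℕ, P lam x * Hf mu x := by
  set t := lam + mu with htdef
  have key : ∀ x : ℕ, (Real.log t + 1) - t * Rf mu x ≤ Hf mu x := by
    intro x
    have hpt : ∀ y : ℕ, P mu y * ((Real.log t + 1) - t * ((x:ℝ) + y + 1)⁻¹)
        ≤ P mu y * Real.log ((x:ℝ) + y + 1) := by
      intro y
      refine mul_le_mul_of_nonneg_left ?_ (P_nonneg hmu y)
      have hpos : (0:ℝ) < (x:ℝ) + y + 1 := by positivity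
      have hlog := Real.log_le_sub_one_of_pos (show (0:ℝ) < t / ((x:ℝ) + y + 1) by positivity)
      rw [Real.log_div (ne_of_gt ht) (ne_of_gt hpos)] at hlog
      have hdiv : t / ((x:ℝ) + y + 1) = t * ((x:ℝ) + y + 1)⁻¹ := div_eq_mul_inv _ _
      rw [hdiv] at hlog
      linarith
    have sb : Summable fun y : ℕ => P mu y * ((Real.log t + 1) - t * ((x:ℝ) + y + 1)⁻¹) := by
      refine (((summable_P mu).mul_left (Real.log t + 1)).sub
        ((summable_R hmu x).mul_left t)).congr fun y => ?_
      ring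
    have h := Summable.tsum_le_tsum hpt sb (summable_H hmu x)
    have heq : ∑' y : ℕ, P mu y * ((Real.log t + 1) - t * ((x:ℝ) + y + 1)⁻¹)
        = (Real.log t + 1) - t * Rf mu x := by
      have e : ∀ y : ℕ, P mu y * ((Real.log t + 1) - t * ((x:ℝ) + y + 1)⁻¹)
          = (Real.log t + 1) * P mu y - t * (P mu y * ((x:ℝ) + y + 1)⁻¹) := fun y => by ring
      rw [tsum_congr e, Summable.tsum_sub (((summable_P mu)).mul_left _)
        ((summable_R hmu x).mul_left t), tsum_mul_left, tsum_mul_left, tsum_P, mul_one, Rf]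
    rw [heq] at h
    exact h
  have houter : ∀ x : ℕ, P lam x * ((Real.log t + 1) - t * Rf mu x) ≤ P lam x * Hf mu x :=
    fun x => mul_le_mul_of_nonneg_left (key x) (P_nonneg hl x)
  have sl : Summable fun x : ℕ => P lam x * ((Real.log t + 1) - t * Rf mu x) := by
    refine (((summable_P lam).mul_left (Real.log t + 1)).sub
      ((summable_PR hl hmu).mul_left t)).congr fun x => ?_
    ring
  have h := Summable.tsum_le_tsum houter sl (summable_PH hl hmu)
  have heq : ∑' x : ℕ, P lam x * ((Real.log t + 1) - t * Rf mu x)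
      = (Real.log t + 1) - t * ∑' x : ℕ, P lam x * Rf mu x := by
    have e : ∀ x : ℕ, P lam x * ((Real.log t + 1) - t * Rf mu x)
        = (Real.log t + 1) * P lam x - t * (P lam x * Rf mu x) := fun x => by ring
    rw [tsum_congr e, Summable.tsum_sub ((summable_P lam).mul_left _)
      ((summable_PR hl hmu).mul_left t), tsum_mul_left, tsum_mul_left, tsum_P, mul_one]
  rw [heq] at h
  have hT := T_le hl hmu
  rw [← htdef] at hT
  linarith

end Stmt9


namespace Stmt9

local notation "P" => poissonPMFReal

variable {lam mu : ℝ}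

lemma per (m : ℝ) (hm : 0 < m) (hl : 0 ≤ lam) (hmu : 0 ≤ mu) (ht : 0 < lam + mu) :
    |(lam - mu) / m * Real.log (1 / (lam + mu))
      - ∑' x : ℕ, ∑' y : ℕ, P lam x * P mu y *
          (((x:ℝ) - (y:ℝ)) / m * Real.log (1 / ((x:ℝ) + (y:ℝ))))|
    ≤ |lam - mu| / (m * (lam + mu)) := by
  rw [E_eq m hl hmu]
  set C := ∑' x : ℕ, P lam x * Hf mu x with hC
  have h1 := C_ge hl hmu ht
  have h2 := C_le hl hmu ht
  rw [one_div (lam + mu), Real.log_inv]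
  have e : (lam - mu) / m * (-Real.log (lam + mu)) - ((mu - lam) / m) * C
      = ((lam - mu) / m) * (C - Real.log (lam + mu)) := by ring
  rw [e, abs_mul, abs_div, abs_of_pos hm]
  have hinv : (0:ℝ) ≤ (lam + mu)⁻¹ := by positivity
  have habs : |C - Real.log (lam + mu)| ≤ (lam + mu)⁻¹ := by
    rw [abs_le]
    constructor <;> linarith
  calc |lam - mu| / m * |C - Real.log (lam + mu)|
      ≤ |lam - mu| / m * (lam + mu)⁻¹ :=
        mul_le_mul_of_nonneg_left habs (by positivity)
    _ = |lam - mu| / (m * (lam + mu)) := by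
        have h1' : m ≠ 0 := ne_of_gt hm
        have h2' : lam + mu ≠ 0 := ne_of_gt ht
        field_simp

lemma per' (m a b : ℝ) (hm : 0 < m) (ha : 0 ≤ a) (hb : 0 ≤ b) (hab : 0 < a + b) :
    |(a - b) * Real.log (1 / (m * (a + b)))
      - ∑' x : ℕ, ∑' y : ℕ, P (m * a) x * P (m * b) y *
          (((x:ℝ) - (y:ℝ)) / m * Real.log (1 / ((x:ℝ) + (y:ℝ))))|
    ≤ |a - b| / (m * (a + b)) := by
  have hl : 0 ≤ m * a := by positivity
  have hmu : 0 ≤ m * b := by positivity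
  have ht : 0 < m * a + m * b := by rw [← mul_add]; positivity
  have h := per (lam := m * a) (mu := m * b) m hm hl hmu ht
  have e1 : (m * a - m * b) / m = a - b := by field_simp
  have e2 : m * a + m * b = m * (a + b) := by ring
  rw [e1, e2, show m * a - m * b = m * (a - b) from by ring, abs_mul, abs_of_pos hm] at h
  have e4 : m * |a - b| / (m * (m * (a + b))) = |a - b| / (m * (a + b)) :=
    mul_div_mul_left _ _ (ne_of_gt hm)
  rwa [e4] at h

end Stmt9

/-- Bias bound for the plug-in cross-entropy estimator: with
`X_i ~ Poisson(m p_i)`, `Y_i ~ Poisson(m q_i)` independent and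
`Z_i = ((X_i − Y_i)/m) log(1/(X_i+Y_i))` (zero when `X_i + Y_i = 0`,
which holds automatically as then `X_i − Y_i = 0`),
`|∑_{i∈S} (p_i−q_i) log(1/(m(p_i+q_i))) − E[∑_{i∈S} Z_i]|
  ≤ ∑_{i∈S} |p_i−q_i|/(m(p_i+q_i))`. -/
theorem stmt_9 (n m : ℕ) (hm : 1 ≤ m) (p q : Fin n → ℝ)
    (hp : ∀ i, 0 ≤ p i) (hq : ∀ i, 0 ≤ q i)
    (hps : ∑ i, p i = 1) (hqs : ∑ i, q i = 1)
    (S : Finset (Fin n)) (hS : ∀ i ∈ S, 0 < p i + q i) :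
    |(∑ i ∈ S, (p i - q i) * Real.log (1 / (m * (p i + q i))))
      - ∑ i ∈ S, ∑' x : ℕ, ∑' y : ℕ,
          poissonPMFReal (m * p i) x * poissonPMFReal (m * q i) y *
            (((x : ℝ) - (y : ℝ)) / m * Real.log (1 / ((x : ℝ) + (y : ℝ))))|
      ≤ ∑ i ∈ S, |p i - q i| / (m * (p i + q i)) := by
  have hm0 : (0:ℝ) < (m:ℝ) := by exact_mod_cast Nat.lt_of_lt_of_le Nat.zero_lt_one hm
  rw [← Finset.sum_sub_distrib]
  refine le_trans (Finset.abs_sum_le_sum_abs _ _) (Finset.sum_le_sum fun i hi => ?_)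
  exact Stmt9.per' (m:ℝ) (p i) (q i) hm0 (hp i) (hq i) (hS i hi)
end

section
/- Let X ~ Poisson(m·p) and Y ~ Poisson(m·q) be independent, and let J = X + Y ~ Poisson(λ) with λ = m(p+q) > 0, δ = (p−q)/(p+q). Then E[((X−Y)² − J)/J · 1{J ≥ 1}] = δ² (λ − 1 + e^{-λ}). -/
open Finset Nat

lemma binom0 (a b : ℝ) (j : ℕ) :
    ∑ x ∈ range (j+1), (j.choose x : ℝ) * a^x * b^(j-x) = (a+b)^j := by
  rw [add_pow]
  exact Finset.sum_congr rfl fun x hx => by ring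

lemma binom1 (a b : ℝ) (j : ℕ) :
    ∑ x ∈ range (j+1), (j.choose x : ℝ) * a^x * b^(j-x) * x = j * a * (a+b)^(j-1) := by
  cases j with
  | zero => simp
  | succ k =>
    rw [Finset.sum_range_succ']
    have h : ∀ x ∈ range (k+1), ((k+1).choose (x+1) : ℝ) * a^(x+1) * b^(k+1-(x+1)) * ((x+1 : ℕ) : ℝ)
        = ((k:ℝ)+1) * a * ((k.choose x : ℝ) * a^x * b^(k-x)) := by
      intro x hx
      have h := Nat.add_one_mul_choose_eq k x
      have hcast : ((k:ℝ)+1) * (k.choose x : ℝ) = ((k+1).choose (x+1) : ℝ) * ((x:ℝ)+1) := by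
        exact_mod_cast congrArg (Nat.cast (R := ℝ)) h
      rw [Nat.succ_sub_succ]
      push_cast
      linear_combination (-(b^(k-x) * a^x * a)) * hcast
    rw [Finset.sum_congr rfl h, ← Finset.mul_sum, binom0]
    push_cast
    simp

lemma binom2 (a b : ℝ) (j : ℕ) :
    ∑ x ∈ range (j+1), (j.choose x : ℝ) * a^x * b^(j-x) * ((x:ℝ) * ((x:ℝ)-1))
      = j * ((j:ℝ)-1) * a^2 * (a+b)^(j-2) := by
  cases j with
  | zero => simp
  | succ k =>
    rw [Finset.sum_range_succ']
    have h : ∀ x ∈ range (k+1), ((k+1).choose (x+1) : ℝ) * a^(x+1) * b^(k+1-(x+1)) *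
          (((x+1 : ℕ):ℝ) * (((x+1 : ℕ):ℝ)-1))
        = ((k:ℝ)+1) * a * ((k.choose x : ℝ) * a^x * b^(k-x) * (x:ℝ)) := by
      intro x hx
      have h := Nat.add_one_mul_choose_eq k x
      have hcast : ((k:ℝ)+1) * (k.choose x : ℝ) = ((k+1).choose (x+1) : ℝ) * ((x:ℝ)+1) := by
        exact_mod_cast congrArg (Nat.cast (R := ℝ)) h
      rw [Nat.succ_sub_succ]
      push_cast
      linear_combination (-(b^(k-x) * a^x * a * (x:ℝ))) * hcast
    rw [Finset.sum_congr rfl h, ← Finset.mul_sum, binom1]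
    push_cast
    norm_num
    ring

lemma binomKey (a b : ℝ) (j : ℕ) (hj : 1 ≤ j) :
    ∑ x ∈ range (j+1), (j.choose x : ℝ) * a^x * b^(j-x) * ((2*(x:ℝ) - j)^2 - j)
      = (j:ℝ) * ((j:ℝ)-1) * (a-b)^2 * (a+b)^(j-2) := by
  have h : ∀ x ∈ range (j+1), (j.choose x : ℝ) * a^x * b^(j-x) * ((2*(x:ℝ) - j)^2 - j)
      = 4 * ((j.choose x : ℝ) * a^x * b^(j-x) * ((x:ℝ) * ((x:ℝ)-1)))
        + (4 - 4*(j:ℝ)) * ((j.choose x : ℝ) * a^x * b^(j-x) * (x:ℝ))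
        + ((j:ℝ)^2 - j) * ((j.choose x : ℝ) * a^x * b^(j-x)) := by
    intro x hx; ring
  rw [Finset.sum_congr rfl h, Finset.sum_add_distrib, Finset.sum_add_distrib,
    ← Finset.mul_sum, ← Finset.mul_sum, ← Finset.mul_sum, binom0, binom1, binom2]
  obtain ⟨k, rfl⟩ : ∃ k, j = k + 1 := ⟨j - 1, by omega⟩
  cases k with
  | zero => norm_num
  | succ l =>
    have e1 : l + 1 + 1 - 1 = l + 1 := rfl
    have e2 : l + 1 + 1 - 2 = l := rfl
    rw [e1, e2]
    push_cast
    ring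

lemma pois_mul (a b : ℝ) {x j : ℕ} (hx : x ≤ j) :
    poissonPMFReal a x * poissonPMFReal b (j-x)
      = Real.exp (-(a+b)) * ((j.choose x : ℝ) * a^x * b^(j-x)) / (Nat.factorial j) := by
  unfold poissonPMFReal
  have hfac : ((j.choose x : ℕ) : ℝ) * (Nat.factorial x : ℝ) * (Nat.factorial (j-x) : ℝ) = (Nat.factorial j : ℝ) := by
    exact_mod_cast congrArg (Nat.cast (R := ℝ)) (Nat.choose_mul_factorial_mul_factorial hx)
  have h1 : (Nat.factorial x : ℝ) ≠ 0 := by positivity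
  have h2 : (Nat.factorial (j-x) : ℝ) ≠ 0 := by positivity
  have h3 : (Nat.factorial j : ℝ) ≠ 0 := by positivity
  have hexp : Real.exp (-(a+b)) = Real.exp (-a) * Real.exp (-b) := by
    rw [← Real.exp_add]; ring_nf
  rw [hexp]
  field_simp
  linear_combination (-(a^x * b^(j-x))) * hfac

lemma antidiag_sum (a b : ℝ) (j : ℕ) :
    ∑ kl ∈ Finset.HasAntidiagonal.antidiagonal j, poissonPMFReal a kl.1 * poissonPMFReal b kl.2 *
      (if 1 ≤ kl.1 + kl.2 then
          (((kl.1 : ℝ) - (kl.2 : ℝ))^2 - ((kl.1 : ℝ) + (kl.2 : ℝ))) / ((kl.1 : ℝ) + (kl.2 : ℝ))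
        else 0)
    = if 1 ≤ j then
        Real.exp (-(a+b)) * (((j:ℝ)-1) * ((a-b)^2 * (a+b)^(j-2))) / (Nat.factorial j)
      else 0 := by
  rw [Finset.Nat.sum_antidiagonal_eq_sum_range_succ (fun x y =>
    poissonPMFReal a x * poissonPMFReal b y *
      (if 1 ≤ x + y then (((x : ℝ) - (y : ℝ))^2 - ((x : ℝ) + (y : ℝ))) / ((x : ℝ) + (y : ℝ)) else 0))]
  cases j with
  | zero => simp
  | succ k =>
    set j := k + 1 with hjdef
    have hj : 1 ≤ j := Nat.succ_le_succ (Nat.zero_le k)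
    have hjR : (0:ℝ) < (j:ℝ) := by positivity
    rw [if_pos hj]
    have hterm : ∀ x ∈ range (j+1),
        poissonPMFReal a x * poissonPMFReal b (j-x) *
          (if 1 ≤ x + (j-x) then
            (((x : ℝ) - ((j-x : ℕ) : ℝ))^2 - ((x : ℝ) + ((j-x : ℕ) : ℝ))) / ((x : ℝ) + ((j-x : ℕ) : ℝ))
          else 0)
        = (Real.exp (-(a+b)) / ((Nat.factorial j) * j)) *
            ((j.choose x : ℝ) * a^x * b^(j-x) * ((2*(x:ℝ) - j)^2 - j)) := by
      intro x hx
      have hxj : x ≤ j := by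
        simp only [Finset.mem_range] at hx; omega
      have hsum : x + (j - x) = j := Nat.add_sub_cancel' hxj
      have hcast : ((j - x : ℕ) : ℝ) = (j:ℝ) - (x:ℝ) := Nat.cast_sub hxj
      rw [hsum, if_pos hj, pois_mul a b hxj, hcast]
      have hfac : (Nat.factorial j : ℝ) ≠ 0 := by positivity
      have hj0 : (j:ℝ) ≠ 0 := hjR.ne'
      rw [show (x:ℝ) + ((j:ℝ) - (x:ℝ)) = j by ring]
      field_simp
      ring
    rw [Finset.sum_congr rfl hterm, ← Finset.mul_sum, binomKey a b j hj]
    have hfac : (Nat.factorial j : ℝ) ≠ 0 := by positivity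
    field_simp

lemma tsum_double_eq (F : ℕ × ℕ → ℝ) (h : Summable F) :
    ∑' (x : ℕ) (y : ℕ), F (x, y) = ∑' n : ℕ, ∑ kl ∈ Finset.HasAntidiagonal.antidiagonal n, F kl := by
  rw [← Summable.tsum_prod' h h.prod_factor,
    ← Finset.HasAntidiagonal.sigmaAntidiagonalEquivProd.tsum_eq F]
  rw [Summable.tsum_sigma' (f := fun c : (Σ n : ℕ, Finset.HasAntidiagonal.antidiagonal n) =>
      F (Finset.HasAntidiagonal.sigmaAntidiagonalEquivProd c)) (fun n => (hasSum_fintype _).summable)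
    (by exact (Equiv.summable_iff Finset.HasAntidiagonal.sigmaAntidiagonalEquivProd).mpr h)]
  exact tsum_congr fun n => Finset.tsum_subtype _ _

lemma summable_exp_ser (x : ℝ) : Summable (fun n : ℕ => x ^ n / n !) :=
  Real.summable_pow_div_factorial x

lemma tsum_exp_ser (x : ℝ) : ∑' n : ℕ, x ^ n / n ! = Real.exp x := by
  rw [Real.exp_eq_exp_ℝ]
  exact (NormedSpace.expSeries_div_hasSum_exp x).tsum_eq

lemma summable_mul_exp_ser (x : ℝ) : Summable (fun n : ℕ => (n : ℝ) * (x ^ n / n !)) := by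
  apply (summable_nat_add_iff 1).mp
  apply ((summable_exp_ser x).mul_left x).congr
  intro n
  have h : ((n+1 : ℕ) : ℝ) ≠ 0 := by positivity
  rw [Nat.factorial_succ]
  push_cast
  field_simp
  ring

lemma tsum_mul_exp_ser (x : ℝ) : ∑' n : ℕ, (n : ℝ) * (x ^ n / n !) = x * Real.exp x := by
  rw [Summable.tsum_eq_zero_add (summable_mul_exp_ser x)]
  simp only [Nat.cast_zero, zero_mul, zero_add]
  have h : ∀ n : ℕ, ((n + 1 : ℕ) : ℝ) * (x ^ (n+1) / (n+1)!) = x * (x ^ n / n !) := by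
    intro n
    have h : ((n+1 : ℕ) : ℝ) ≠ 0 := by positivity
    rw [Nat.factorial_succ]
    push_cast
    field_simp
    ring
  rw [tsum_congr h, tsum_mul_left, tsum_exp_ser]

lemma summable_mul2_exp_ser (x : ℝ) :
    Summable (fun n : ℕ => (n : ℝ) * ((n : ℝ) - 1) * (x ^ n / n !)) := by
  apply (summable_nat_add_iff 2).mp
  apply ((summable_exp_ser x).mul_left (x^2)).congr
  intro n
  have h1 : ((n+1 : ℕ) : ℝ) ≠ 0 := by positivity
  have h2 : ((n+2 : ℕ) : ℝ) ≠ 0 := by positivity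
  have e : (n + 2)! = (n+2) * ((n+1) * n !) := by
    rw [Nat.factorial_succ, Nat.factorial_succ]
  rw [e]
  push_cast
  field_simp
  ring

lemma pois_nonneg {a : ℝ} (ha : 0 ≤ a) (k : ℕ) : 0 ≤ poissonPMFReal a k := by
  unfold poissonPMFReal
  positivity

lemma summable_pois (a : ℝ) : Summable (poissonPMFReal a) := by
  unfold poissonPMFReal
  simp_rw [mul_div_assoc]
  exact (summable_exp_ser a).mul_left _

lemma summable_sq_pois (a : ℝ) : Summable (fun k : ℕ => (k : ℝ)^2 * poissonPMFReal a k) := by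
  have h := ((summable_mul2_exp_ser a).add (summable_mul_exp_ser a)).mul_left (Real.exp (-a))
  apply h.congr
  intro k
  unfold poissonPMFReal
  ring

set_option maxHeartbeats 1000000 in
lemma summable_F (a b : ℝ) (ha : 0 ≤ a) (hb : 0 ≤ b) :
    Summable (fun p : ℕ × ℕ => poissonPMFReal a p.1 * poissonPMFReal b p.2 *
      (if 1 ≤ p.1 + p.2 then
          (((p.1 : ℝ) - (p.2 : ℝ))^2 - ((p.1 : ℝ) + (p.2 : ℝ))) / ((p.1 : ℝ) + (p.2 : ℝ))
        else 0)) := by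
  have hbnd : Summable (fun p : ℕ × ℕ => poissonPMFReal a p.1 * poissonPMFReal b p.2 *
      (2 * (p.1 : ℝ)^2 + 2 * (p.2 : ℝ)^2 + 1)) := by
    have h1 : Summable (fun p : ℕ × ℕ =>
        ((p.1 : ℝ)^2 * poissonPMFReal a p.1) * poissonPMFReal b p.2) :=
      (summable_sq_pois a).mul_of_nonneg (summable_pois b)
        (fun k => mul_nonneg (by positivity) (pois_nonneg ha k)) (fun k => pois_nonneg hb k)
    have h2 : Summable (fun p : ℕ × ℕ =>
        poissonPMFReal a p.1 * ((p.2 : ℝ)^2 * poissonPMFReal b p.2)) :=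
      (summable_pois a).mul_of_nonneg (summable_sq_pois b)
        (fun k => pois_nonneg ha k) (fun k => mul_nonneg (by positivity) (pois_nonneg hb k))
    have h3 : Summable (fun p : ℕ × ℕ => poissonPMFReal a p.1 * poissonPMFReal b p.2) :=
      (summable_pois a).mul_of_nonneg (summable_pois b)
        (fun k => pois_nonneg ha k) (fun k => pois_nonneg hb k)
    apply (((h1.mul_left 2).add (h2.mul_left 2)).add h3).congr
    intro p
    ring
  rw [← summable_abs_iff]
  apply hbnd.of_nonneg_of_le (fun p => abs_nonneg _)
  intro p
  obtain ⟨x, y⟩ := p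
  simp only
  rcases Nat.eq_zero_or_pos (x + y) with hz | hpos
  · rw [if_neg (by omega)]
    simp only [mul_zero, abs_zero]
    have := pois_nonneg ha x
    have := pois_nonneg hb y
    positivity
  · rw [if_pos (show 1 ≤ x + y from hpos)]
    have hP1 := pois_nonneg ha x
    have hP2 := pois_nonneg hb y
    have hs : (1:ℝ) ≤ (x : ℝ) + (y : ℝ) := by exact_mod_cast hpos
    have hs0 : (0:ℝ) < (x : ℝ) + (y : ℝ) := by linarith
    rw [abs_mul, abs_of_nonneg (mul_nonneg hP1 hP2)]
    apply mul_le_mul_of_nonneg_left _ (mul_nonneg hP1 hP2)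
    rw [abs_div, abs_of_pos hs0, div_le_iff₀ hs0]
    have habs : |(((x : ℝ) - (y : ℝ))^2 - ((x : ℝ) + (y : ℝ)))|
        ≤ ((x : ℝ) - (y : ℝ))^2 + ((x : ℝ) + (y : ℝ)) := by
      rw [abs_sub_comm]
      apply (abs_sub _ _).trans
      rw [abs_of_pos hs0, abs_of_nonneg (by positivity)]
      linarith
    calc |(((x : ℝ) - (y : ℝ))^2 - ((x : ℝ) + (y : ℝ)))|
        ≤ ((x : ℝ) - (y : ℝ))^2 + ((x : ℝ) + (y : ℝ)) := habs
      _ ≤ (2 * (x : ℝ)^2 + 2 * (y : ℝ)^2 + 1) * ((x : ℝ) + (y : ℝ)) := by nlinarith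

lemma tail_tsum (a b : ℝ) (hs : 0 < a + b) :
    ∑' j : ℕ, (if 1 ≤ j then
        Real.exp (-(a+b)) * (((j:ℝ)-1) * ((a-b)^2 * (a+b)^(j-2))) / (Nat.factorial j)
      else 0)
    = ((a-b)/(a+b))^2 * ((a+b) - 1 + Real.exp (-(a+b))) := by
  set s : ℝ := a + b with hsdef
  set D : ℝ := ((a-b)/s)^2 with hDdef
  have hs0 : s ≠ 0 := ne_of_gt hs
  have hpt : ∀ j : ℕ, (if 1 ≤ j then
        Real.exp (-s) * (((j:ℝ)-1) * ((a-b)^2 * s^(j-2))) / (Nat.factorial j)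
      else 0)
      = Real.exp (-s) * D * ((j:ℝ) * (s^j / Nat.factorial j) - s^j / Nat.factorial j)
        + (if j = 0 then Real.exp (-s) * D else 0) := by
    intro j
    match j with
    | 0 => norm_num
    | 1 => norm_num
    | (l+2) =>
      rw [if_pos (by omega), if_neg (by omega)]
      have e2 : l + 2 - 2 = l := rfl
      rw [e2, add_zero]
      have hfac : (Nat.factorial (l+2) : ℝ) ≠ 0 := by positivity
      rw [hDdef]
      push_cast
      field_simp
      ring
  rw [tsum_congr hpt]
  have hsum1 : Summable (fun j : ℕ =>
      Real.exp (-s) * D * ((j:ℝ) * (s^j / Nat.factorial j) - s^j / Nat.factorial j)) :=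
    ((summable_mul_exp_ser s).sub (summable_exp_ser s)).mul_left _
  have hsum2 : Summable (fun j : ℕ => if j = 0 then Real.exp (-s) * D else 0) :=
    (hasSum_ite_eq 0 (Real.exp (-s) * D)).summable
  rw [Summable.tsum_add hsum1 hsum2, tsum_mul_left,
    Summable.tsum_sub (summable_mul_exp_ser s) (summable_exp_ser s),
    tsum_mul_exp_ser, tsum_exp_ser, tsum_ite_eq]
  have hE : Real.exp (-s) * Real.exp s = 1 := by
    rw [← Real.exp_add]; simp
  linear_combination (D * (s - 1)) * hE

lemma tsum_double_eq' (g : ℕ → ℕ → ℝ) (h : Summable (fun p : ℕ × ℕ => g p.1 p.2)) :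
    ∑' (x : ℕ) (y : ℕ), g x y = ∑' n : ℕ, ∑ kl ∈ Finset.HasAntidiagonal.antidiagonal n, g kl.1 kl.2 := by
  simpa using tsum_double_eq (fun p : ℕ × ℕ => g p.1 p.2) h

/-- Expectation of the chi-square-type statistic: with `X ~ Poisson(mp)`,
`Y ~ Poisson(mq)` independent, `λ = m(p+q)`, and `δ = (p−q)/(p+q)`,
`E[((X−Y)² − J)/J · 1{J ≥ 1}] = δ² (λ − 1 + e^{-λ})` where `J = X+Y`. -/
theorem stmt_10 (m : ℕ) (hm : 1 ≤ m) (p q : ℝ)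
    (hp : 0 ≤ p) (hq : 0 ≤ q) (hpq : 0 < p + q) :
    ∑' x : ℕ, ∑' y : ℕ,
        poissonPMFReal (m * p) x * poissonPMFReal (m * q) y *
          (if 1 ≤ x + y then
            (((x : ℝ) - (y : ℝ)) ^ 2 - ((x : ℝ) + (y : ℝ))) / ((x : ℝ) + (y : ℝ))
           else 0)
      = ((p - q) / (p + q)) ^ 2
          * ((m : ℝ) * (p + q) - 1 + Real.exp (-((m : ℝ) * (p + q)))) := by
  have hm0 : (0:ℝ) < m := by exact_mod_cast hm
  set a : ℝ := m * p with hadef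
  set b : ℝ := m * q with hbdef
  have ha : 0 ≤ a := by positivity
  have hb : 0 ≤ b := by positivity
  have hs : 0 < a + b := by rw [hadef, hbdef]; nlinarith
  have e1 : a + b = (m:ℝ) * (p + q) := by rw [hadef, hbdef]; ring
  have e2 : a - b = (m:ℝ) * (p - q) := by rw [hadef, hbdef]; ring
  refine ((tsum_double_eq' (fun x y =>
      poissonPMFReal a x * poissonPMFReal b y *
        (if 1 ≤ x + y then
          (((x : ℝ) - (y : ℝ)) ^ 2 - ((x : ℝ) + (y : ℝ))) / ((x : ℝ) + (y : ℝ))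
         else 0)) (summable_F a b ha hb)).trans ?_)
  refine (tsum_congr fun n => antidiag_sum a b n).trans ?_
  refine (tail_tsum a b hs).trans ?_
  rw [e2, ← e1, div_pow, div_pow, mul_pow]
  rw [show (a + b)^2 = (m:ℝ)^2 * (p+q)^2 from by rw [e1]; ring,
    mul_div_mul_left _ _ (by positivity : ((m:ℝ)^2) ≠ 0), e1]
end

section
/- Let p, q be Bayes nets over {0,1}^n, each Markov with respect to a DAG G. Then D_KL(p̃ ‖ q̃_G) − D_KL(p̃ ‖ p̃_G) = ∑_{i=1}^n (D_KL(p̃_{X_i,Π_i} ‖ q̃_{X_i,Π_i}) − D_KL(p̃_{Π_i} ‖ q̃_{Π_i})) ≤ ∑_{i=1}^n D_KL(p̃_{X_i,Π_i} ‖ q̃_{X_i,Π_i}), for any distributions p̃, q̃ over {0,1}^n with full support, where Π_i is the parent set of node i in G, r_G denotes the Bayes-net projection r_G(x) = ∏_i r(x_i | π_i), and r_T denotes marginalization onto coordinates T. -/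
open Finset

/-- Marginal of a distribution `p` on `{0,1}^n` onto the coordinates in `T`. -/
noncomputable def margOn {n : ℕ} (p : (Fin n → Bool) → ℝ) (T : Finset (Fin n))
    (z : {i // i ∈ T} → Bool) : ℝ :=
  ∑ y ∈ Finset.univ.filter (fun y : Fin n → Bool => ∀ i : {i // i ∈ T}, y i.1 = z i), p y

/-- KL divergence between two functions on a finite type. -/
noncomputable def klDivF {α : Type*} [Fintype α] (a b : α → ℝ) : ℝ :=
  ∑ x, a x * Real.log (a x / b x)

/-- The Bayes-net projection of `r` onto the structure with parent sets `Par`: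
`r_G(x) = ∏_i r(x_i | x_{Π_i})`. -/
noncomputable def bnProj {n : ℕ} (r : (Fin n → Bool) → ℝ) (Par : Fin n → Finset (Fin n))
    (x : Fin n → Bool) : ℝ :=
  ∏ i, margOn r (insert i (Par i)) (fun j => x j.1) / margOn r (Par i) (fun j => x j.1)

lemma margOn_pos {n : ℕ} (p : (Fin n → Bool) → ℝ) (hp : ∀ x, 0 < p x)
    (T : Finset (Fin n)) (z : {i // i ∈ T} → Bool) : 0 < margOn p T z := by
  apply Finset.sum_pos (fun y _ => hp y)
  refine ⟨fun i => if h : i ∈ T then z ⟨i, h⟩ else false, ?_⟩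
  simp only [Finset.mem_filter, Finset.mem_univ, true_and]
  intro i; simp [i.2]

lemma sum_marg_mul {n : ℕ} (p : (Fin n → Bool) → ℝ) (T : Finset (Fin n))
    (g : ({i // i ∈ T} → Bool) → ℝ) :
    ∑ z, margOn p T z * g z = ∑ x, p x * g (fun i => x i.1) := by
  rw [← Finset.sum_fiberwise (Finset.univ : Finset (Fin n → Bool))
      (fun x => (fun i : {i // i ∈ T} => x i.1)) (fun x => p x * g (fun i => x i.1))]
  refine Finset.sum_congr rfl fun z _ => ?_
  have hm : margOn p T z = ∑ y ∈ Finset.univ.filter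
      (fun y : Fin n → Bool => (fun i : {i // i ∈ T} => y i.1) = z), p y := by
    unfold margOn; congr 1
    apply Finset.filter_congr; intro y _; simp [funext_iff]
  rw [hm, Finset.sum_mul]
  refine Finset.sum_congr rfl fun y hy => ?_
  simp only [Finset.mem_filter] at hy
  rw [hy.2]

lemma margOn_total {n : ℕ} (p : (Fin n → Bool) → ℝ) (T : Finset (Fin n)) :
    ∑ z, margOn p T z = ∑ x, p x := by
  have := sum_marg_mul p T (fun _ => 1)
  simpa using this

lemma gibbs {α : Type*} [Fintype α] (a b : α → ℝ) (ha : ∀ x, 0 < a x) (hb : ∀ x, 0 < b x)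
    (hab : ∑ x, a x = ∑ x, b x) : 0 ≤ klDivF a b := by
  have key : ∀ x : α, a x - b x ≤ a x * Real.log (a x / b x) := by
    intro x
    have h := Real.log_le_sub_one_of_pos (div_pos (hb x) (ha x))
    have hlog : Real.log (a x / b x) = - Real.log (b x / a x) := by
      rw [← Real.log_inv, inv_div]
    have h2 : a x * Real.log (b x / a x) ≤ a x * (b x / a x - 1) :=
      mul_le_mul_of_nonneg_left h (ha x).le
    have h3 : a x * (b x / a x - 1) = b x - a x := by
      rw [mul_sub, mul_one, mul_div_cancel₀ _ (ha x).ne']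
    rw [hlog, mul_neg]
    linarith
  have : ∑ x, (a x - b x) ≤ ∑ x, a x * Real.log (a x / b x) :=
    Finset.sum_le_sum (fun x _ => key x)
  rw [Finset.sum_sub_distrib, hab, sub_self] at this
  exact this

lemma log_bnProj {n : ℕ} (r : (Fin n → Bool) → ℝ) (hr : ∀ x, 0 < r x)
    (Par : Fin n → Finset (Fin n)) (x : Fin n → Bool) :
    Real.log (bnProj r Par x)
      = ∑ i, (Real.log (margOn r (insert i (Par i)) (fun j => x j.1))
            - Real.log (margOn r (Par i) (fun j => x j.1))) := by
  unfold bnProj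
  rw [Real.log_prod (fun i _ => (div_pos (margOn_pos r hr _ _) (margOn_pos r hr _ _)).ne')]
  exact Finset.sum_congr rfl fun i _ =>
    Real.log_div (margOn_pos r hr _ _).ne' (margOn_pos r hr _ _).ne'

lemma klDivF_marg {n : ℕ} (pt qt : (Fin n → Bool) → ℝ)
    (hpt : ∀ x, 0 < pt x) (hqt : ∀ x, 0 < qt x) (T : Finset (Fin n)) :
    klDivF (margOn pt T) (margOn qt T)
      = ∑ x, pt x * (Real.log (margOn pt T (fun j => x j.1))
                   - Real.log (margOn qt T (fun j => x j.1))) := by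
  unfold klDivF
  rw [← sum_marg_mul pt T
      (fun z => Real.log (margOn pt T z) - Real.log (margOn qt T z))]
  refine Finset.sum_congr rfl fun z _ => ?_
  rw [Real.log_div (margOn_pos pt hpt T z).ne' (margOn_pos qt hqt T z).ne']

/-- For full-support `p̃, q̃` on `{0,1}^n` and a DAG with parent sets `Par`:
`D_KL(p̃ ‖ q̃_G) − D_KL(p̃ ‖ p̃_G)
  = ∑_i (D_KL(p̃_{X_i,Π_i} ‖ q̃_{X_i,Π_i}) − D_KL(p̃_{Π_i} ‖ q̃_{Π_i}))
  ≤ ∑_i D_KL(p̃_{X_i,Π_i} ‖ q̃_{X_i,Π_i})`. -/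
theorem stmt_14 (n : ℕ) (Par : Fin n → Finset (Fin n))
    (hdag : ∀ i, ∀ j ∈ Par i, j < i)
    (pt qt : (Fin n → Bool) → ℝ)
    (hpt : ∀ x, 0 < pt x) (hqt : ∀ x, 0 < qt x)
    (hpts : ∑ x, pt x = 1) (hqts : ∑ x, qt x = 1) :
    klDivF pt (bnProj qt Par) - klDivF pt (bnProj pt Par)
        = ∑ i, (klDivF (margOn pt (insert i (Par i))) (margOn qt (insert i (Par i)))
            - klDivF (margOn pt (Par i)) (margOn qt (Par i)))
    ∧ klDivF pt (bnProj qt Par) - klDivF pt (bnProj pt Par)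
        ≤ ∑ i, klDivF (margOn pt (insert i (Par i))) (margOn qt (insert i (Par i))) := by
  have hbp : ∀ x, 0 < bnProj pt Par x := fun x =>
    Finset.prod_pos fun i _ => div_pos (margOn_pos pt hpt _ _) (margOn_pos pt hpt _ _)
  have hbq : ∀ x, 0 < bnProj qt Par x := fun x =>
    Finset.prod_pos fun i _ => div_pos (margOn_pos qt hqt _ _) (margOn_pos qt hqt _ _)
  have key : klDivF pt (bnProj qt Par) - klDivF pt (bnProj pt Par)
      = ∑ i, (klDivF (margOn pt (insert i (Par i))) (margOn qt (insert i (Par i)))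
          - klDivF (margOn pt (Par i)) (margOn qt (Par i))) := by
    unfold klDivF
    rw [← Finset.sum_sub_distrib]
    have lhs_eq : ∀ x : Fin n → Bool,
        pt x * Real.log (pt x / bnProj qt Par x) - pt x * Real.log (pt x / bnProj pt Par x)
          = ∑ i, (pt x * (Real.log (margOn pt (insert i (Par i)) (fun j => x j.1))
                        - Real.log (margOn qt (insert i (Par i)) (fun j => x j.1)))
                - pt x * (Real.log (margOn pt (Par i) (fun j => x j.1))
                        - Real.log (margOn qt (Par i) (fun j => x j.1)))) := by
      intro x
      rw [Real.log_div (hpt x).ne' (hbq x).ne', Real.log_div (hpt x).ne' (hbp x).ne',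
        log_bnProj pt hpt Par x, log_bnProj qt hqt Par x]
      rw [mul_sub, mul_sub, Finset.mul_sum, Finset.mul_sum]
      have habc : ∀ A Sq Sp : ℝ, (A - Sq) - (A - Sp) = Sp - Sq := fun _ _ _ => by ring
      rw [habc, ← Finset.sum_sub_distrib]
      exact Finset.sum_congr rfl fun i _ => by ring
    calc ∑ x, (pt x * Real.log (pt x / bnProj qt Par x)
            - pt x * Real.log (pt x / bnProj pt Par x))
        = ∑ x, ∑ i, (pt x * (Real.log (margOn pt (insert i (Par i)) (fun j => x j.1))
                        - Real.log (margOn qt (insert i (Par i)) (fun j => x j.1)))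
                - pt x * (Real.log (margOn pt (Par i) (fun j => x j.1))
                        - Real.log (margOn qt (Par i) (fun j => x j.1)))) :=
          Finset.sum_congr rfl fun x _ => lhs_eq x
      _ = ∑ i, ∑ x, (pt x * (Real.log (margOn pt (insert i (Par i)) (fun j => x j.1))
                        - Real.log (margOn qt (insert i (Par i)) (fun j => x j.1)))
                - pt x * (Real.log (margOn pt (Par i) (fun j => x j.1))
                        - Real.log (margOn qt (Par i) (fun j => x j.1)))) := Finset.sum_comm
      _ = ∑ i, (klDivF (margOn pt (insert i (Par i))) (margOn qt (insert i (Par i)))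
          - klDivF (margOn pt (Par i)) (margOn qt (Par i))) := by
          refine Finset.sum_congr rfl fun i _ => ?_
          rw [Finset.sum_sub_distrib, klDivF_marg pt qt hpt hqt,
            klDivF_marg pt qt hpt hqt]
  refine ⟨key, ?_⟩
  rw [key]
  refine Finset.sum_le_sum fun i _ => ?_
  have h0 : 0 ≤ klDivF (margOn pt (Par i)) (margOn qt (Par i)) := by
    apply gibbs _ _ (margOn_pos pt hpt _) (margOn_pos qt hqt _)
    rw [margOn_total, margOn_total, hpts, hqts]
  linarith
end
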